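/- Two-out-of-three up to addition of constants for systems of sets: given maps of systems f : X → Y and g : Y → Z with h = g∘f, if h is an r-isomorphism and g is an s-isomorphism, then f is an (r+s)-isomorphism. -/

import Mathlib

open scoped NNReal

/-- A system of sets: a functor `[0,∞) → Set`, given by sets `X_s` and compatible
structure maps `σ : X_s → X_t` for `s ≤ t`. -/
structure SysSet where
  obj : ℝ≥0 → Type
  map : ∀ {s t : ℝ≥0}, s ≤ t → obj s → obj t
  map_id : ∀ (s : ℝ≥0) (x : obj s), map le_rfl x = x
  map_comp : ∀ {s t u : ℝ≥0} (h₁ : s ≤ t) (h₂ : t ≤ u) (x : obj s),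
    map h₂ (map h₁ x) = map (h₁.trans h₂) x

/-- A map of systems of sets: a natural transformation of functors. -/
structure SysSet.Hom (X Y : SysSet) where
  app : ∀ s, X.obj s → Y.obj s
  naturality : ∀ {s t : ℝ≥0} (h : s ≤ t) (x : X.obj s),
    app t (X.map h x) = Y.map h (app s x)

/-- Composition of maps of systems (`(f.comp g) = g ∘ f`). -/
def SysSet.Hom.comp {X Y Z : SysSet} (f : X.Hom Y) (g : Y.Hom Z) : X.Hom Z where
  app s x := g.app s (f.app s x)
  naturality h x := by (try simp only); rw [f.naturality, g.naturality]

/-- `f` is an `r`-monomorphism: if `f(x) = f(y)` in `Y_s` then `σ(x) = σ(y)` in `X_{s+r}`. -/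
def SysSet.Hom.IsMono {X Y : SysSet} (r : ℝ≥0) (f : X.Hom Y) : Prop :=
  ∀ (s : ℝ≥0) (x y : X.obj s), f.app s x = f.app s y →
    X.map (le_self_add : s ≤ s + r) x = X.map le_self_add y

/-- `f` is an `r`-epimorphism: every `y ∈ Y_s` satisfies `σ(y) = f(x)` in `Y_{s+r}` for
some `x ∈ X_{s+r}`. -/
def SysSet.Hom.IsEpi {X Y : SysSet} (r : ℝ≥0) (f : X.Hom Y) : Prop :=
  ∀ (s : ℝ≥0) (y : Y.obj s), ∃ x : X.obj (s + r),
    f.app (s + r) x = Y.map (le_self_add : s ≤ s + r) y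

/-- `f` is an `r`-isomorphism if it is both an `r`-monomorphism and an `r`-epimorphism. -/
def SysSet.Hom.IsIso {X Y : SysSet} (r : ℝ≥0) (f : X.Hom Y) : Prop :=
  f.IsMono r ∧ f.IsEpi r

/-- Two-out-of-three up to addition of constants: if `h = g ∘ f` is an `r`-isomorphism
and `g` is an `s`-isomorphism, then `f` is an `(r+s)`-isomorphism. -/
theorem stmt13 {X Y Z : SysSet} (f : X.Hom Y) (g : Y.Hom Z) (h : X.Hom Z)
    (hh : h = f.comp g) (r s : ℝ≥0)
    (hr : h.IsIso r) (hs : g.IsIso s) : f.IsIso (r + s) := by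
  constructor
  · intro t x y hxy
    have hz : h.app t x = h.app t y := by
      rw [hh]; simp only [SysSet.Hom.comp, hxy]
    have h1 := hr.1 t x y hz
    have h2 := congrArg (X.map (add_le_add_right le_self_add t : t + r ≤ t + (r + s))) h1
    rw [X.map_comp, X.map_comp] at h2
    exact h2
  · intro t y
    obtain ⟨x, hx⟩ := hr.2 t (g.app t y)
    rw [hh] at hx
    have hgy : g.app (t + r) (f.app (t + r) x) = g.app (t + r) (Y.map le_self_add y) := by
      have := g.naturality (le_self_add : t ≤ t + r) y
      exact hx.trans this.symm
    have h2 := hs.1 (t + r) _ _ hgy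
    have key : ∀ (u : ℝ≥0) (hu : t ≤ u), u = t + r + s →
        ∃ x : X.obj u, f.app u x = Y.map hu y := by
      rintro u hu rfl
      refine ⟨X.map le_self_add x, ?_⟩
      rw [f.naturality, h2, Y.map_comp]
    exact key _ le_self_add (add_assoc t r s).symm
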